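/- arXiv:2404.14517 — 2 statements merged into one kernel-verified Lean document; each statement's English description precedes it below -/
import Mathlib

section
/- Let 𝔴₁ and 𝔴₂ be data words over the same alphabet and process sets such that 𝔴₂ is a reordering of the positions of 𝔴₁ in which every process has the same class (the same sequence of actions) as in 𝔴₁. Then 𝔴₁ and 𝔴₂ satisfy exactly the same prefFO^dw sentences. -/
set_option maxHeartbeats 1000000

namespace PrefSynth

/-! ### Possibly infinite words -/

/-- A (finite or infinite) word over alphabet `A`: positions carrying `some` letter. -/
abbrev Word (A : Type) : Type := ℕ → Option A

/-- `m` is a position of the word `w`. -/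
def Word.pos {A : Type} (w : Word A) (m : ℕ) : Prop := w m ≠ none

/-- A genuine word: its domain is downward closed. -/
def Word.Closed {A : Type} (w : Word A) : Prop :=
  ∀ i j : ℕ, i ≤ j → w j ≠ none → w i ≠ none

/-- The finite word given by a list. -/
def Word.ofList {A : Type} (l : List A) : Word A := fun i => l[i]?

/-- The infinite word given by a function. -/
def Word.ofFun {A : Type} (u : ℕ → A) : Word A := fun i => some (u i)

/-- The prefix of a word consisting of its first `n` positions; `Word.take w (m+1)`
is `w[0…m]`. -/
def Word.take {A : Type} (w : Word A) (n : ℕ) : Word A :=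
  fun i => if i < n then w i else none

/-- `u` is a prefix of `v`. -/
def Word.IsPrefix {A : Type} (u v : Word A) : Prop :=
  ∀ i, u i ≠ none → v i = u i

/-! ### Prefix first-order logic on words

Formulas in context `n`: the free variables are `Fin n`; when `n ≥ 1`, the variable
`0` is the bounding variable `x̄`, all other variables are prefix variables, and
every quantifier is of the form `∃ x < x̄` (new variables are appended at the end,
i.e. interpreted through `Fin.snoc`). -/

inductive PFm (A : Type) : ℕ → Type where
  | eq {n} : Fin n → Fin n → PFm A n
  | lt {n} : Fin n → Fin n → PFm A n
  | letter {n} : A → Fin n → PFm A n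
  | and {n} : PFm A n → PFm A n → PFm A n
  | not {n} : PFm A n → PFm A n
  | exlt {n} : PFm A (n + 2) → PFm A (n + 1)

/-- Quantifier depth. -/
def PFm.depth {A : Type} : {n : ℕ} → PFm A n → ℕ
  | _, .eq _ _ => 0
  | _, .lt _ _ => 0
  | _, .letter _ _ => 0
  | _, .and φ ψ => max φ.depth ψ.depth
  | _, .not φ => φ.depth
  | _, .exlt φ => φ.depth + 1

/-- Satisfaction of a prefFO formula in a word, under an assignment of the
free variables to positions. -/
def PFm.Sat {A : Type} (w : Word A) : {n : ℕ} → PFm A n → (Fin n → ℕ) → Prop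
  | _, .eq i j, ρ => ρ i = ρ j
  | _, .lt i j, ρ => ρ i < ρ j
  | _, .letter a i, ρ => w (ρ i) = some a
  | _, .and φ ψ, ρ => PFm.Sat w φ ρ ∧ PFm.Sat w ψ ρ
  | _, .not φ, ρ => ¬ PFm.Sat w φ ρ
  | _, .exlt φ, ρ => ∃ m : ℕ, Word.pos w m ∧ m < ρ 0 ∧ PFm.Sat w φ (Fin.snoc ρ m)

/-- prefFO sentences: start by quantifying the bounding variable, and are closed
under boolean combinations. -/
inductive PSen (A : Type) : Type where
  | exB : PFm A 1 → PSen A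
  | and : PSen A → PSen A → PSen A
  | not : PSen A → PSen A

/-- Quantifier depth of a sentence. -/
def PSen.depth {A : Type} : PSen A → ℕ
  | .exB φ => φ.depth + 1
  | .and s t => max s.depth t.depth
  | .not s => s.depth

/-- Satisfaction of a prefFO sentence in a word. -/
def PSen.Sat {A : Type} (w : Word A) : PSen A → Prop
  | .exB φ => ∃ m : ℕ, Word.pos w m ∧ PFm.Sat w φ (fun _ => m)
  | .and s t => PSen.Sat w s ∧ PSen.Sat w t
  | .not s => ¬ PSen.Sat w s

/-- The prefFO `k`-type of a word: the set of prefFO sentences of quantifier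
depth at most `k` it satisfies. -/
def tp {A : Type} (k : ℕ) (w : Word A) : Set (PSen A) :=
  {s | PSen.depth s ≤ k ∧ PSen.Sat w s}

/-- `Types_k`: the set of prefFO `k`-types of finite words over `A`. -/
def WTypes (A : Type) (k : ℕ) : Set (Set (PSen A)) :=
  {T | ∃ l : List A, T = tp k (Word.ofList l)}

/-- The relation `⪯` on types: `τ ⪯ τ'` iff some finite word of type `τ` has an
extension of type `τ'`. -/
def typeLe {A : Type} (k : ℕ) (τ τ' : Set (PSen A)) : Prop :=
  ∃ u v : List A, tp k (Word.ofList u) = τ ∧ tp k (Word.ofList (u ++ v)) = τ'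

/-- Two words agree on all prefFO sentences of quantifier depth at most `k`. -/
def prefEquiv {A : Type} (k : ℕ) (w w' : Word A) : Prop :=
  ∀ s : PSen A, PSen.depth s ≤ k → (PSen.Sat w s ↔ PSen.Sat w' s)

/-! ### Full first-order logic on words -/

inductive FOFm (A : Type) : ℕ → Type where
  | eq {n} : Fin n → Fin n → FOFm A n
  | lt {n} : Fin n → Fin n → FOFm A n
  | letter {n} : A → Fin n → FOFm A n
  | and {n} : FOFm A n → FOFm A n → FOFm A n
  | not {n} : FOFm A n → FOFm A n
  | ex {n} : FOFm A (n + 1) → FOFm A n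

def FOFm.depth {A : Type} : {n : ℕ} → FOFm A n → ℕ
  | _, .eq _ _ => 0
  | _, .lt _ _ => 0
  | _, .letter _ _ => 0
  | _, .and φ ψ => max φ.depth ψ.depth
  | _, .not φ => φ.depth
  | _, .ex φ => φ.depth + 1

def FOFm.Sat {A : Type} (w : Word A) : {n : ℕ} → FOFm A n → (Fin n → ℕ) → Prop
  | _, .eq i j, ρ => ρ i = ρ j
  | _, .lt i j, ρ => ρ i < ρ j
  | _, .letter a i, ρ => w (ρ i) = some a
  | _, .and φ ψ, ρ => FOFm.Sat w φ ρ ∧ FOFm.Sat w ψ ρ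
  | _, .not φ, ρ => ¬ FOFm.Sat w φ ρ
  | _, .ex φ, ρ => ∃ m : ℕ, Word.pos w m ∧ FOFm.Sat w φ (Fin.snoc ρ m)

/-- Two words agree on all FO sentences of quantifier depth at most `k`. -/
def foEquiv {A : Type} (k : ℕ) (w w' : Word A) : Prop :=
  ∀ s : FOFm A 0, FOFm.depth s ≤ k →
    (FOFm.Sat w s Fin.elim0 ↔ FOFm.Sat w' s Fin.elim0)

/-! ### The prefix Ehrenfeucht–Fraïssé game on words

After the first (bounding) round, pebbles are kept as matched pairs of
positions: `(m, m')` with `m` in the first word and `m'` in the second. -/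

/-- The agreement condition: the correspondence between pebbled positions
preserves equality, the order `<` and the letters. -/
def AgreeW {A : Type} (u v : Word A) (L : List (ℕ × ℕ)) : Prop :=
  ∀ p ∈ L, ∀ q ∈ L,
    ((p.1 = q.1) ↔ (p.2 = q.2)) ∧ ((p.1 < q.1) ↔ (p.2 < q.2)) ∧
    (∀ a : A, u p.1 = some a ↔ v p.2 = some a)

/-- `DupWinW u v b b' r L`: with bounding pebbles placed on `b` (in `u`) and `b'`
(in `v`), and prefix pebbles `L` already placed, Duplicator wins the game with `r`
remaining rounds. -/
def DupWinW {A : Type} (u v : Word A) (b b' : ℕ) : ℕ → List (ℕ × ℕ) → Prop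
  | 0, L => AgreeW u v ((b, b') :: L)
  | r + 1, L => AgreeW u v ((b, b') :: L) ∧
      (∀ m, Word.pos u m → m < b →
        ∃ m', Word.pos v m' ∧ m' < b' ∧ DupWinW u v b b' r ((m, m') :: L)) ∧
      (∀ m', Word.pos v m' → m' < b' →
        ∃ m, Word.pos u m ∧ m < b ∧ DupWinW u v b b' r ((m, m') :: L))

/-! ### Data words -/

/-- A move of a data word: a System action together with a System process, or an
Environment action together with an Environment process. `A`, `B` are the System
and Environment alphabets; `P`, `Q` the System and Environment process sets. -/
abbrev DMove (A B P Q : Type) : Type := (A × P) ⊕ (B × Q)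

/-- The process of a move. -/
def dproc {A B P Q : Type} : DMove A B P Q → P ⊕ Q :=
  Sum.elim (fun ap => Sum.inl ap.2) (fun bq => Sum.inr bq.2)

/-- The action of a move. -/
def dact {A B P Q : Type} : DMove A B P Q → A ⊕ B :=
  Sum.elim (fun ap => Sum.inl ap.1) (fun bq => Sum.inr bq.1)

/-- The process acting at position `m` of a data word. -/
def procAt {A B P Q : Type} (d : Word (DMove A B P Q)) (m : ℕ) : Option (P ⊕ Q) :=
  (d m).map dproc

/-- The action taken at position `m` of a data word. -/
def actAt {A B P Q : Type} (d : Word (DMove A B P Q)) (m : ℕ) : Option (A ⊕ B) :=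
  (d m).map dact

/-- Elements of the structure associated with a data word: one process element
for every process, and one element for every position. -/
abbrev Elem (P Q : Type) : Type := (P ⊕ Q) ⊕ ℕ

/-- The `∼`-class (i.e. the process) of an element of a data word. -/
def classOfE {A B P Q : Type} (d : Word (DMove A B P Q)) : Elem P Q → Option (P ⊕ Q)
  | .inl q => some q
  | .inr m => procAt d m

/-! ### Prefix first-order logic on data words

`PDW A B p b x` : formulas in a context with `p` process variables, `b` bounding
variables and `x` prefix variables.  Sentences (possibly with constants, constants
being modelled as the initial free variables) are obtained by instantiating the
contexts. -/

/-- A variable of any of the three kinds. -/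
abbrev DVar (p b x : ℕ) : Type := Fin p ⊕ (Fin b ⊕ Fin x)

inductive PDW (A B : Type) : ℕ → ℕ → ℕ → Type where
  | eq {p b x} : DVar p b x → DVar p b x → PDW A B p b x
  | procS {p b x} : Fin p → PDW A B p b x
  | procE {p b x} : Fin p → PDW A B p b x
  | letter {p b x} : (A ⊕ B) → (Fin b ⊕ Fin x) → PDW A B p b x
  | lesim {p b x} : Fin x → Fin x → PDW A B p b x
  | sim {p b x} : Fin p → DVar p b x → PDW A B p b x
  | and {p b x} : PDW A B p b x → PDW A B p b x → PDW A B p b x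
  | not {p b x} : PDW A B p b x → PDW A B p b x
  | exP {p b x} : PDW A B (p + 1) b x → PDW A B p b x
  | exB {p b x} : PDW A B p (b + 1) x → PDW A B p b x
  | exX {p b x} : Fin b → PDW A B p b (x + 1) → PDW A B p b x

/-- Quantifier depth. -/
def PDW.depth {A B : Type} : {p b x : ℕ} → PDW A B p b x → ℕ
  | _, _, _, .eq _ _ => 0
  | _, _, _, .procS _ => 0
  | _, _, _, .procE _ => 0
  | _, _, _, .letter _ _ => 0
  | _, _, _, .lesim _ _ => 0
  | _, _, _, .sim _ _ => 0
  | _, _, _, .and φ ψ => max φ.depth ψ.depth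
  | _, _, _, .not φ => φ.depth
  | _, _, _, .exP φ => φ.depth + 1
  | _, _, _, .exB φ => φ.depth + 1
  | _, _, _, .exX _ φ => φ.depth + 1

/-- Interpretation of a variable as an element of the data-word structure. -/
def interpDVar {P Q : Type} {p b x : ℕ} (ρP : Fin p → P ⊕ Q) (ρB : Fin b → ℕ)
    (ρX : Fin x → ℕ) : DVar p b x → Elem P Q
  | .inl i => Sum.inl (ρP i)
  | .inr (.inl i) => Sum.inr (ρB i)
  | .inr (.inr i) => Sum.inr (ρX i)

/-- Satisfaction of a prefFO^dw formula in a data word, under assignments of the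
process, bounding and prefix variables.  New bounding variables must be positions
lying in a fresh class (w.r.t. all present bounding variables), new prefix
variables must be `≲` their associated bounding variable. -/
def PDW.Sat {A B P Q : Type} (d : Word (DMove A B P Q)) :
    {p b x : ℕ} → PDW A B p b x → (Fin p → P ⊕ Q) → (Fin b → ℕ) → (Fin x → ℕ) → Prop
  | _, _, _, .eq v w, ρP, ρB, ρX => interpDVar ρP ρB ρX v = interpDVar ρP ρB ρX w
  | _, _, _, .procS i, ρP, _, _ => ∃ q : P, ρP i = Sum.inl q
  | _, _, _, .procE i, ρP, _, _ => ∃ q : Q, ρP i = Sum.inr q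
  | _, _, _, .letter a v, _, ρB, ρX => actAt d (Sum.elim ρB ρX v) = some a
  | _, _, _, .lesim i j, _, _, ρX =>
      ρX i < ρX j ∧ ∃ q, procAt d (ρX i) = some q ∧ procAt d (ρX j) = some q
  | _, _, _, .sim i v, ρP, ρB, ρX => classOfE d (interpDVar ρP ρB ρX v) = some (ρP i)
  | _, _, _, .and φ ψ, ρP, ρB, ρX => PDW.Sat d φ ρP ρB ρX ∧ PDW.Sat d ψ ρP ρB ρX
  | _, _, _, .not φ, ρP, ρB, ρX => ¬ PDW.Sat d φ ρP ρB ρX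
  | _, _, _, .exP φ, ρP, ρB, ρX => ∃ q : P ⊕ Q, PDW.Sat d φ (Fin.snoc ρP q) ρB ρX
  | _, _, _, .exB φ, ρP, ρB, ρX => ∃ m : ℕ, d m ≠ none ∧
      (∀ j, procAt d m ≠ procAt d (ρB j)) ∧ PDW.Sat d φ ρP (Fin.snoc ρB m) ρX
  | _, _, _, .exX y φ, ρP, ρB, ρX => ∃ m : ℕ, d m ≠ none ∧ m < ρB y ∧
      procAt d m = procAt d (ρB y) ∧ PDW.Sat d φ ρP ρB (Fin.snoc ρX m)

/-- Satisfaction of a prefFO^dw sentence (no constants) in a data word. -/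
def SatS {A B P Q : Type} (d : Word (DMove A B P Q)) (φ : PDW A B 0 0 0) : Prop :=
  PDW.Sat d φ Fin.elim0 Fin.elim0 Fin.elim0

/-! ### Classes of a data word -/

/-- `m` is a position of process `q` in the data word `d`. -/
def isPosOf {A B P Q : Type} (d : Word (DMove A B P Q)) (q : P ⊕ Q) (m : ℕ) : Prop :=
  procAt d m = some q

open Classical in
/-- The class of process `q` in the data word `d`, as a (finite or infinite) word
over `A ⊕ B`: its `i`-th letter is the action taken at the `i`-th position of `q`. -/
noncomputable def classWord {A B P Q : Type} (d : Word (DMove A B P Q)) (q : P ⊕ Q) :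
    Word (A ⊕ B) :=
  fun i =>
    if {m | isPosOf d q m}.Infinite ∨ i < Set.ncard {m | isPosOf d q m}
    then actAt d (Nat.nth (isPosOf d q) i) else none

/-- The set of processes of `d` whose class has prefFO `k`-type `τ`. -/
def classesOfType {A B P Q : Type} (d : Word (DMove A B P Q)) (k : ℕ)
    (τ : Set (PSen (A ⊕ B))) : Set (P ⊕ Q) :=
  {q | tp k (classWord d q) = τ}

end PrefSynth
/-! ### The prefix Ehrenfeucht–Fraïssé game on data words (with constants) -/

namespace PrefSynth

/-- A pebble placed on a data word: a process pebble, a bounding pebble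
or a prefix pebble. -/
inductive Peb (P Q : Type) : Type where
  | proc : P ⊕ Q → Peb P Q
  | bound : ℕ → Peb P Q
  | pref : ℕ → Peb P Q

/-- The element on which a pebble is placed. -/
def Peb.elem {P Q : Type} : Peb P Q → Elem P Q
  | .proc q => Sum.inl q
  | .bound m => Sum.inr m
  | .pref m => Sum.inr m

/-- `e` is a System process element. -/
def IsProcSE {P Q : Type} (e : Elem P Q) : Prop := ∃ q : P, e = Sum.inl (Sum.inl q)

/-- `e` is an Environment process element. -/
def IsProcEE {P Q : Type} (e : Elem P Q) : Prop := ∃ q : Q, e = Sum.inl (Sum.inr q)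

/-- `e` is a position labelled by the letter `a`. -/
def LetterIsE {A B P Q : Type} (d : Word (DMove A B P Q)) (e : Elem P Q) (a : A ⊕ B) :
    Prop := ∃ m : ℕ, e = Sum.inr m ∧ actAt d m = some a

/-- `e ∼ f` in the data word `d`. -/
def SimE {A B P Q : Type} (d : Word (DMove A B P Q)) (e f : Elem P Q) : Prop :=
  ∃ q, classOfE d e = some q ∧ classOfE d f = some q

/-- `e ≲ f` in the data word `d`. -/
def LesimE {A B P Q : Type} (d : Word (DMove A B P Q)) (e f : Elem P Q) : Prop :=
  ∃ m m' : ℕ, e = Sum.inr m ∧ f = Sum.inr m' ∧ m < m' ∧ SimE d e f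

/-- Agreement of a correspondence between elements of two data words: it must
preserve equality, `Proc_S`, `Proc_E`, the letters, `≲` and `∼`. -/
def AgreeDW {A B P Q P' Q' : Type} (d : Word (DMove A B P Q))
    (d' : Word (DMove A B P' Q')) (E : List (Elem P Q × Elem P' Q')) : Prop :=
  ∀ e ∈ E, ∀ f ∈ E,
    ((e.1 = f.1) ↔ (e.2 = f.2)) ∧
    (IsProcSE e.1 ↔ IsProcSE e.2) ∧
    (IsProcEE e.1 ↔ IsProcEE e.2) ∧
    (∀ a : A ⊕ B, LetterIsE d e.1 a ↔ LetterIsE d' e.2 a) ∧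
    (LesimE d e.1 f.1 ↔ LesimE d' e.2 f.2) ∧
    (SimE d e.1 f.1 ↔ SimE d' e.2 f.2)

/-- A legal bounding move: a position whose class contains no previously placed
bounding pebble (from `l`) and no bounding constant (from `B0`). -/
def LegalBound {A B P Q : Type} (d : Word (DMove A B P Q)) (B0 : List ℕ)
    (l : List (Peb P Q)) (m : ℕ) : Prop :=
  d m ≠ none ∧ (∀ m₀ : ℕ, Peb.bound m₀ ∈ l → procAt d m ≠ procAt d m₀) ∧
    (∀ m₀ ∈ B0, procAt d m ≠ procAt d m₀)

/-- A legal prefix move: a position such that some previously placed bounding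
pebble or bounding constant lies in the same class, at a later position. -/
def LegalPref {A B P Q : Type} (d : Word (DMove A B P Q)) (B0 : List ℕ)
    (l : List (Peb P Q)) (m : ℕ) : Prop :=
  d m ≠ none ∧
    ∃ m₀ : ℕ, (Peb.bound m₀ ∈ l ∨ m₀ ∈ B0) ∧ m < m₀ ∧ procAt d m = procAt d m₀

/-- The matched pairs of elements determined by the constants `E0` and the
pebbles `L`. -/
def pairElems {P Q P' Q' : Type} (E0 : List (Elem P Q × Elem P' Q'))
    (L : List (Peb P Q × Peb P' Q')) : List (Elem P Q × Elem P' Q') :=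
  E0 ++ L.map (fun pq => (pq.1.elem, pq.2.elem))

/-- `DupWinDW d d' E0 B0 B0' r L`: Duplicator wins the `r`-round prefix EF game on
the data words `d` and `d'` with matched constant elements `E0` (the bounding
constants being interpreted by `B0` in `d` and by `B0'` in `d'`) and already
placed matched pebbles `L`. -/
def DupWinDW {A B P Q P' Q' : Type} (d : Word (DMove A B P Q))
    (d' : Word (DMove A B P' Q')) (E0 : List (Elem P Q × Elem P' Q'))
    (B0 B0' : List ℕ) : ℕ → List (Peb P Q × Peb P' Q') → Prop
  | 0, L => AgreeDW d d' (pairElems E0 L)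
  | r + 1, L => AgreeDW d d' (pairElems E0 L) ∧
      (∀ q : P ⊕ Q, ∃ q' : P' ⊕ Q',
        DupWinDW d d' E0 B0 B0' r ((Peb.proc q, Peb.proc q') :: L)) ∧
      (∀ q' : P' ⊕ Q', ∃ q : P ⊕ Q,
        DupWinDW d d' E0 B0 B0' r ((Peb.proc q, Peb.proc q') :: L)) ∧
      (∀ m : ℕ, LegalBound d B0 (L.map Prod.fst) m →
        ∃ m' : ℕ, LegalBound d' B0' (L.map Prod.snd) m' ∧
          DupWinDW d d' E0 B0 B0' r ((Peb.bound m, Peb.bound m') :: L)) ∧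
      (∀ m' : ℕ, LegalBound d' B0' (L.map Prod.snd) m' →
        ∃ m : ℕ, LegalBound d B0 (L.map Prod.fst) m ∧
          DupWinDW d d' E0 B0 B0' r ((Peb.bound m, Peb.bound m') :: L)) ∧
      (∀ m : ℕ, LegalPref d B0 (L.map Prod.fst) m →
        ∃ m' : ℕ, LegalPref d' B0' (L.map Prod.snd) m' ∧
          DupWinDW d d' E0 B0 B0' r ((Peb.pref m, Peb.pref m') :: L)) ∧
      (∀ m' : ℕ, LegalPref d' B0' (L.map Prod.snd) m' →
        ∃ m : ℕ, LegalPref d B0 (L.map Prod.fst) m ∧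
          DupWinDW d d' E0 B0 B0' r ((Peb.pref m, Peb.pref m') :: L))

/-- The constants of a data word: interpretations of `cp` process constants,
`cb` bounding constants and `cx` prefix constants.  Validity: bounding and
prefix constants are positions, no two bounding constants share a class, and
each prefix constant is `≲` some bounding constant. -/
def ValidConsts {A B P Q : Type} {cp cb cx : ℕ} (d : Word (DMove A B P Q))
    (γP : Fin cp → P ⊕ Q) (γB : Fin cb → ℕ) (γX : Fin cx → ℕ) : Prop :=
  (∀ j, d (γB j) ≠ none) ∧ (∀ j, d (γX j) ≠ none) ∧
  (∀ i j, i ≠ j → procAt d (γB i) ≠ procAt d (γB j)) ∧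
  (∀ i, ∃ j, γX i < γB j ∧ procAt d (γX i) = procAt d (γB j))

/-- The matched constant elements determined by two interpretations of the same
constant symbols. -/
def constPairs {P Q P' Q' : Type} {cp cb cx : ℕ}
    (γP : Fin cp → P ⊕ Q) (γB : Fin cb → ℕ) (γX : Fin cx → ℕ)
    (γP' : Fin cp → P' ⊕ Q') (γB' : Fin cb → ℕ) (γX' : Fin cx → ℕ) :
    List (Elem P Q × Elem P' Q') :=
  (List.ofFn fun i : Fin cp =>
    ((Sum.inl (γP i) : Elem P Q), (Sum.inl (γP' i) : Elem P' Q'))) ++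
  (List.ofFn fun i : Fin cb =>
    ((Sum.inr (γB i) : Elem P Q), (Sum.inr (γB' i) : Elem P' Q'))) ++
  (List.ofFn fun i : Fin cx =>
    ((Sum.inr (γX i) : Elem P Q), (Sum.inr (γX' i) : Elem P' Q')))

/-! ### The standard synthesis game -/

/-- A System strategy in the standard synthesis game: given the finite data word
played so far, output a System action and process, or pass (`none` plays the
role of `ε`). -/
abbrev Strat (A B P Q : Type) : Type := List (DMove A B P Q) → Option (A × P)

/-- The list of the first `n` moves of a data word. -/
def histList {M : Type} (d : Word M) (n : ℕ) : List M := (List.range n).filterMap d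

/-- The data word `d` is compatible with the System strategy `σ`. -/
def CompatibleStd {A B P Q : Type} (σ : Strat A B P Q) (d : Word (DMove A B P Q)) :
    Prop :=
  ∀ i a p, d i = some (Sum.inl (a, p)) → σ (histList d i) = some (a, p)

/-- The data word `d` is fair with respect to `σ`: either it is finite and `σ`
passes after it, or (being infinite) if `σ` wants to play infinitely often then
System actions occur infinitely often. -/
def FairStd {A B P Q : Type} (σ : Strat A B P Q) (d : Word (DMove A B P Q)) : Prop :=
  (∃ n, d n = none ∧ (∀ i, i < n → d i ≠ none) ∧ σ (histList d n) = none) ∨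
  ((∀ n, d n ≠ none) ∧
    ((∀ N, ∃ i, N ≤ i ∧ σ (histList d (i + 1)) ≠ none) →
     (∀ N, ∃ i, N ≤ i ∧ ∃ a p, d i = some (Sum.inl (a, p)))))

/-- `σ` is winning for `φ` in the standard synthesis game: every compatible and
fair data word satisfies `φ`. -/
def WinningStd {A B P Q : Type} (φ : PDW A B 0 0 0) (σ : Strat A B P Q) : Prop :=
  ∀ d : Word (DMove A B P Q), Word.Closed d → CompatibleStd σ d → FairStd σ d →
    SatS d φ

/-- System has an `(nS, nE)`-winning strategy for `φ` in the standard synthesis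
game: a winning strategy whenever `|P_S| = nS` and `|P_E| = nE`. -/
def SystemWinsStd (A B : Type) (φ : PDW A B 0 0 0) (nS nE : ℕ) : Prop :=
  ∀ (P Q : Type), Finite P → Finite Q → Nat.card P = nS → Nat.card Q = nE →
    ∃ σ : Strat A B P Q, WinningStd φ σ

/-! ### The symmetric game -/

/-- A System strategy in the symmetric game: may answer by any finite sequence
of System moves (`[]` playing the role of `ε`). -/
abbrev SymStrat (A B P Q : Type) : Type := List (DMove A B P Q) → List (A × P)

/-- The history after `n` rounds of the symmetric game, the Environment playing
the finite blocks `env 0, env 1, …` and System answering according to `σ`,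
with strict alternation, Environment first. -/
def symHist {A B P Q : Type} (σ : SymStrat A B P Q) (env : ℕ → List (B × Q)) :
    ℕ → List (DMove A B P Q)
  | 0 => []
  | n + 1 =>
      let h := symHist σ env n ++ (env n).map Sum.inr
      h ++ (σ h).map Sum.inl

/-- The data word `d` is compatible with the symmetric strategy `σ`: it is the
limit of the histories of an alternating play in which System follows `σ`. -/
def CompatibleSym {A B P Q : Type} (σ : SymStrat A B P Q)
    (d : Word (DMove A B P Q)) : Prop :=
  ∃ env : ℕ → List (B × Q),
    (∀ n i x, (symHist σ env n)[i]? = some x → d i = some x) ∧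
    (∀ i, d i ≠ none → ∃ n, i < (symHist σ env n).length)

/-- Fairness in the symmetric game: if `d` is finite then `σ` passes after it. -/
def FairSym {A B P Q : Type} (σ : SymStrat A B P Q) (d : Word (DMove A B P Q)) :
    Prop :=
  ∀ n, d n = none → (∀ i, i < n → d i ≠ none) → σ (histList d n) = []

/-- `σ` is winning for `φ` in the symmetric game. -/
def WinningSym {A B P Q : Type} (φ : PDW A B 0 0 0) (σ : SymStrat A B P Q) : Prop :=
  ∀ d : Word (DMove A B P Q), Word.Closed d → CompatibleSym σ d → FairSym σ d →
    SatS d φ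

/-- System has an `(nS, nE)`-winning strategy for `φ` in the symmetric game. -/
def SystemWinsSym (A B : Type) (φ : PDW A B 0 0 0) (nS nE : ℕ) : Prop :=
  ∀ (P Q : Type), Finite P → Finite Q → Nat.card P = nS → Nat.card Q = nE →
    ∃ σ : SymStrat A B P Q, WinningSym φ σ

/-! ### The token game on types -/

/-- A node of the arena: a prefFO `k`-type of finite words. -/
abbrev Typ (A : Type) (k : ℕ) : Type := {T : Set (PSen A) // T ∈ WTypes A k}

/-- The initial node: the type of the empty word. -/
def initTyp (A : Type) (k : ℕ) : Typ A k :=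
  ⟨tp k (Word.ofList ([] : List A)), ⟨[], rfl⟩⟩

/-- The transition relation of the arena. -/
def typLe {A : Type} {k : ℕ} (τ τ' : Typ A k) : Prop := typeLe k τ.1 τ'.1

/-- A configuration: the position of each token in the arena.  `TS` and `TE` are
the sets of System and Environment tokens. -/
abbrev Conf (A : Type) (k : ℕ) (TS TE : Type) : Type := (TS ⊕ TE) → Typ A k

/-- A System strategy in the token game: given the sequence of configurations
so far, where to move each System token. -/
abbrev TokStrat (A : Type) (k : ℕ) (TS TE : Type) : Type :=
  List (Conf A k TS TE) → TS → Typ A k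

/-- A play of the token game: all tokens start on the initial node, tokens only
move along `⪯`, and the players strictly alternate, Environment first (at even
stages Environment moves, so System tokens stay put; at odd stages System moves). -/
def IsPlay {A : Type} {k : ℕ} {TS TE : Type} (conf : ℕ → Conf A k TS TE) : Prop :=
  (∀ t, conf 0 t = initTyp A k) ∧
  (∀ n t, typLe (conf n t) (conf (n + 1) t)) ∧
  (∀ n, Even n → ∀ t : TS, conf (n + 1) (Sum.inl t) = conf n (Sum.inl t)) ∧
  (∀ n, ¬ Even n → ∀ t : TE, conf (n + 1) (Sum.inr t) = conf n (Sum.inr t))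

/-- The play `conf` is compatible with the System strategy `σ`. -/
def CompatibleTok {A : Type} {k : ℕ} {TS TE : Type} (σ : TokStrat A k TS TE)
    (conf : ℕ → Conf A k TS TE) : Prop :=
  ∀ n, ¬ Even n → ∀ t : TS,
    conf (n + 1) (Sum.inl t) = σ (List.ofFn (fun i : Fin (n + 1) => conf i)) t

/-- The strategy `σ` only suggests legal moves (along `⪯`). -/
def StratLegal {A : Type} {k : ℕ} {TS TE : Type} (σ : TokStrat A k TS TE) : Prop :=
  ∀ (h : List (Conf A k TS TE)) (hne : h ≠ []) (t : TS),
    typLe (h.getLast hne (Sum.inl t)) (σ h t)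

/-- A configuration matches a `k`-counting function `c` (values `≥ k`
representing `k+`): the number of tokens on each type `τ` is exactly `c τ` when
`c τ < k`, and at least `k` otherwise. -/
def CfgMatches {A : Type} {k : ℕ} {TS TE : Type} (c : Typ A k → ℕ)
    (cfg : Conf A k TS TE) : Prop :=
  ∀ τ : Typ A k,
    (c τ < k → Nat.card {t : TS ⊕ TE // cfg t = τ} = c τ) ∧
    (¬ c τ < k → k ≤ Nat.card {t : TS ⊕ TE // cfg t = τ})

/-- The acceptance set `Acc_φ`: the `k`-counting functions `c` such that every
data word whose numbers of classes of each prefFO `k`-type match `c` satisfies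
`φ`. -/
def AccC (A B : Type) (k : ℕ) (φ : PDW A B 0 0 0) (c : Typ (A ⊕ B) k → ℕ) : Prop :=
  (∀ τ, c τ ≤ k) ∧
  ∀ (P Q : Type) (d : Word (DMove A B P Q)), Word.Closed d →
    (∀ τ : Typ (A ⊕ B) k,
      (c τ < k → Cardinal.mk ↥(classesOfType d k τ.1) = (c τ : Cardinal)) ∧
      (¬ c τ < k → (k : Cardinal) ≤ Cardinal.mk ↥(classesOfType d k τ.1))) →
    SatS d φ

/-- The strategy `σ` is winning in the token game for `φ`: every compatible
maximal play stabilizes in a limit configuration satisfying the acceptance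
condition. -/
def TokWinning {A B : Type} {k : ℕ} {TS TE : Type} (φ : PDW A B 0 0 0)
    (σ : TokStrat (A ⊕ B) k TS TE) : Prop :=
  ∀ conf : ℕ → Conf (A ⊕ B) k TS TE, IsPlay conf → CompatibleTok σ conf →
    ∃ N, (∀ n, N ≤ n → conf n = conf N) ∧
      ∃ c : Typ (A ⊕ B) k → ℕ, AccC A B k φ c ∧ CfgMatches c (conf N)

/-- The pair `(nS, nE)` is winning for System in the token game for `φ` (of
depth `k`). -/
def SystemWinsTok (A B : Type) (k : ℕ) (φ : PDW A B 0 0 0) (nS nE : ℕ) : Prop :=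
  ∀ (TS TE : Type), Finite TS → Finite TE → Nat.card TS = nS → Nat.card TE = nE →
    ∃ σ : TokStrat (A ⊕ B) k TS TE, StratLegal σ ∧ TokWinning φ σ

/-! ### An explicit encoding of prefFO^dw sentences, for decidability -/

/-- Encoding of a variable. -/
def encodeDVar {p b x : ℕ} : DVar p b x → ℕ
  | .inl i => Nat.pair 0 i.1
  | .inr (.inl i) => Nat.pair 1 i.1
  | .inr (.inr i) => Nat.pair 2 i.1

/-- An explicit injective encoding of prefFO^dw formulas over the alphabets
`Fin m` and `Fin n` into the natural numbers. -/
def encodePDW {m n : ℕ} : {p b x : ℕ} → PDW (Fin m) (Fin n) p b x → ℕ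
  | _, _, _, .eq v w => Nat.pair 0 (Nat.pair (encodeDVar v) (encodeDVar w))
  | _, _, _, .procS i => Nat.pair 1 i.1
  | _, _, _, .procE i => Nat.pair 2 i.1
  | _, _, _, .letter a v =>
      Nat.pair 3 (Nat.pair
        (Sum.elim (fun i => Nat.pair 0 i.1) (fun j => Nat.pair 1 j.1) a)
        (Sum.elim (fun i => Nat.pair 0 i.1) (fun j => Nat.pair 1 j.1) v))
  | _, _, _, .lesim i j => Nat.pair 4 (Nat.pair i.1 j.1)
  | _, _, _, .sim i v => Nat.pair 5 (Nat.pair i.1 (encodeDVar v))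
  | _, _, _, .and φ ψ => Nat.pair 6 (Nat.pair (encodePDW φ) (encodePDW ψ))
  | _, _, _, .not φ => Nat.pair 7 (encodePDW φ)
  | _, _, _, .exP φ => Nat.pair 8 (encodePDW φ)
  | _, _, _, .exB φ => Nat.pair 9 (encodePDW φ)
  | _, _, _, .exX y φ => Nat.pair 10 (Nat.pair y.1 (encodePDW φ))

end PrefSynth

namespace PrefSynth

theorem key_transfer {A B P Q : Type} (d₁ d₂ : Word (DMove A B P Q)) (f : ℕ → ℕ)
    (hinj : ∀ i j, Word.pos d₁ i → Word.pos d₁ j → f i = f j → i = j)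
    (hlab : ∀ i, Word.pos d₁ i → d₂ (f i) = d₁ i)
    (hsurj : ∀ j, Word.pos d₂ j → ∃ i, Word.pos d₁ i ∧ f i = j)
    (hord : ∀ i j, Word.pos d₁ i → Word.pos d₁ j → i < j →
      procAt d₁ i = procAt d₁ j → f i < f j) :
    ∀ {p b x : ℕ} (φ : PDW A B p b x) (ρP : Fin p → P ⊕ Q) (ρB : Fin b → ℕ)
      (ρX : Fin x → ℕ), (∀ j, Word.pos d₁ (ρB j)) → (∀ j, Word.pos d₁ (ρX j)) →
      (PDW.Sat d₁ φ ρP ρB ρX ↔ PDW.Sat d₂ φ ρP (f ∘ ρB) (f ∘ ρX)) := by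
  have hpos₂ : ∀ i, Word.pos d₁ i → Word.pos d₂ (f i) := by
    intro i hi
    simpa [Word.pos, hlab i hi] using hi
  have hproc : ∀ i, Word.pos d₁ i → procAt d₂ (f i) = procAt d₁ i := by
    intro i hi; simp [procAt, hlab i hi]
  have hact : ∀ i, Word.pos d₁ i → actAt d₂ (f i) = actAt d₁ i := by
    intro i hi; simp [actAt, hlab i hi]
  have hlt : ∀ i j, Word.pos d₁ i → Word.pos d₁ j →
      procAt d₁ i = procAt d₁ j → (i < j ↔ f i < f j) := by
    intro i j hi hj hpq
    constructor
    · exact fun h => hord i j hi hj h hpq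
    · intro h
      rcases lt_trichotomy i j with h' | h' | h'
      · exact h'
      · subst h'; exact absurd h (lt_irrefl _)
      · exact absurd (hord j i hj hi h' hpq.symm) (by omega)
  have heq : ∀ i j, Word.pos d₁ i → Word.pos d₁ j → (i = j ↔ f i = f j) :=
    fun i j hi hj => ⟨fun h => by rw [h], fun h => hinj i j hi hj h⟩
  intro p b x φ
  induction φ with
  | eq v w =>
      intro ρP ρB ρX hB hX
      rcases v with i | u
      · rcases w with j | u'
        · simp [PDW.Sat, interpDVar]
        · rcases u' with j | j <;> simp [PDW.Sat, interpDVar]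
      · rcases w with j | u'
        · rcases u with i | i <;> simp [PDW.Sat, interpDVar]
        · rcases u with i | i <;> rcases u' with j | j <;>
            simp only [PDW.Sat, interpDVar, Function.comp_apply, Sum.inr.injEq]
          · exact heq _ _ (hB i) (hB j)
          · exact heq _ _ (hB i) (hX j)
          · exact heq _ _ (hX i) (hB j)
          · exact heq _ _ (hX i) (hX j)
  | procS i => intro ρP ρB ρX hB hX; exact Iff.rfl
  | procE i => intro ρP ρB ρX hB hX; exact Iff.rfl
  | letter a v =>
      intro ρP ρB ρX hB hX
      rcases v with i | i <;>
        simp only [PDW.Sat, Sum.elim_inl, Sum.elim_inr, Function.comp_apply]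
      · rw [hact _ (hB i)]
      · rw [hact _ (hX i)]
  | lesim i j =>
      intro ρP ρB ρX hB hX
      simp only [PDW.Sat, Function.comp_apply, hproc _ (hX i), hproc _ (hX j)]
      constructor
      · rintro ⟨h, q, hq1, hq2⟩
        exact ⟨(hlt _ _ (hX i) (hX j) (hq1.trans hq2.symm)).mp h, q, hq1, hq2⟩
      · rintro ⟨h, q, hq1, hq2⟩
        exact ⟨(hlt _ _ (hX i) (hX j) (hq1.trans hq2.symm)).mpr h, q, hq1, hq2⟩
  | sim i v =>
      intro ρP ρB ρX hB hX
      rcases v with i' | u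
      · exact Iff.rfl
      · rcases u with j | j <;>
          simp only [PDW.Sat, interpDVar, classOfE, Function.comp_apply]
        · rw [hproc _ (hB j)]
        · rw [hproc _ (hX j)]
  | and φ ψ ihφ ihψ =>
      intro ρP ρB ρX hB hX
      exact and_congr (ihφ ρP ρB ρX hB hX) (ihψ ρP ρB ρX hB hX)
  | not φ ih =>
      intro ρP ρB ρX hB hX
      exact not_congr (ih ρP ρB ρX hB hX)
  | exP φ ih =>
      intro ρP ρB ρX hB hX
      exact exists_congr fun q => ih (Fin.snoc ρP q) ρB ρX hB hX
  | exB φ ih =>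
      intro ρP ρB ρX hB hX
      constructor
      · rintro ⟨m, hm, hfresh, hsat⟩
        refine ⟨f m, hpos₂ m hm, ?_, ?_⟩
        · intro j
          simp only [Function.comp_apply, hproc _ hm, hproc _ (hB j)]
          exact hfresh j
        · have hB' : ∀ j, Word.pos d₁ ((Fin.snoc ρB m : Fin _ → ℕ) j) := by
            intro j
            refine Fin.lastCases ?_ ?_ j
            · simpa [Word.pos] using hm
            · intro i; simpa using hB i
          have := (ih ρP (Fin.snoc ρB m) ρX hB' hX).mp hsat
          rwa [Fin.comp_snoc] at this
      · rintro ⟨m', hm', hfresh, hsat⟩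
        obtain ⟨m, hm, rfl⟩ := hsurj m' hm'
        refine ⟨m, hm, ?_, ?_⟩
        · intro j
          have := hfresh j
          simpa only [Function.comp_apply, hproc _ hm, hproc _ (hB j)] using this
        · have hB' : ∀ j, Word.pos d₁ ((Fin.snoc ρB m : Fin _ → ℕ) j) := by
            intro j
            refine Fin.lastCases ?_ ?_ j
            · simpa using hm
            · intro i; simpa using hB i
          rw [← Fin.comp_snoc] at hsat
          exact (ih ρP (Fin.snoc ρB m) ρX hB' hX).mpr hsat
  | exX y φ ih =>
      intro ρP ρB ρX hB hX
      constructor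
      · rintro ⟨m, hm, hmlt, hmproc, hsat⟩
        refine ⟨f m, hpos₂ m hm, ?_, ?_, ?_⟩
        · exact hord m (ρB y) hm (hB y) hmlt hmproc
        · simp only [Function.comp_apply, hproc _ hm, hproc _ (hB y)]
          exact hmproc
        · have hX' : ∀ j, Word.pos d₁ ((Fin.snoc ρX m : Fin _ → ℕ) j) := by
            intro j
            refine Fin.lastCases ?_ ?_ j
            · simpa [Word.pos] using hm
            · intro i; simpa using hX i
          have := (ih ρP ρB (Fin.snoc ρX m) hB hX').mp hsat
          rwa [Fin.comp_snoc] at this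
      · rintro ⟨m', hm', hmlt, hmproc, hsat⟩
        obtain ⟨m, hm, rfl⟩ := hsurj m' hm'
        have hmp : procAt d₁ m = procAt d₁ (ρB y) := by
          have := hmproc
          simpa only [Function.comp_apply, hproc _ hm, hproc _ (hB y)] using this
        refine ⟨m, hm, ?_, hmp, ?_⟩
        · exact (hlt m (ρB y) hm (hB y) hmp).mpr hmlt
        · have hX' : ∀ j, Word.pos d₁ ((Fin.snoc ρX m : Fin _ → ℕ) j) := by
            intro j
            refine Fin.lastCases ?_ ?_ j
            · simpa using hm
            · intro i; simpa using hX i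
          rw [← Fin.comp_snoc] at hsat
          exact (ih ρP ρB (Fin.snoc ρX m) hB hX').mpr hsat

/-- If `d₂` is a reordering of the positions of `d₁` (via a
label-preserving bijection `f` between their positions) in which every process
has the same class — i.e. `f` is increasing on the positions of each process —
then `d₁` and `d₂` satisfy exactly the same prefFO^dw sentences. -/
theorem reordering_preserves_prefFOdw {A B P Q : Type} [Finite A] [Finite B]
    (d₁ d₂ : Word (DMove A B P Q)) (h₁ : Word.Closed d₁) (h₂ : Word.Closed d₂)
    (f : ℕ → ℕ)
    (hinj : ∀ i j, Word.pos d₁ i → Word.pos d₁ j → f i = f j → i = j)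
    (hlab : ∀ i, Word.pos d₁ i → d₂ (f i) = d₁ i)
    (hsurj : ∀ j, Word.pos d₂ j → ∃ i, Word.pos d₁ i ∧ f i = j)
    (hord : ∀ i j, Word.pos d₁ i → Word.pos d₁ j → i < j →
      procAt d₁ i = procAt d₁ j → f i < f j) :
    ∀ φ : PDW A B 0 0 0, SatS d₁ φ ↔ SatS d₂ φ := by
  intro φ
  have h := key_transfer d₁ d₂ f hinj hlab hsurj hord φ Fin.elim0 Fin.elim0
    Fin.elim0 (fun j => j.elim0) (fun j => j.elim0)
  have he : (f ∘ (Fin.elim0 : Fin 0 → ℕ)) = Fin.elim0 := funext fun j => j.elim0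
  rw [he] at h
  exact h

end PrefSynth
end

section
/- For every k ∈ ℕ there exist finite words u and v over the two-letter alphabet {a,b} such that tp_k(u) = tp_k(v) but tp_3(u·a) ≠ tp_3(v·a); hence the equivalence 'having the same prefFO k-type' is not a congruence for concatenation in the monoid of finite words. Concretely, for n large enough with respect to k, u = (ab)^n·a and v = (ab)^{n+1} satisfy tp_k(u) = tp_k(v), while u·a contains two consecutive occurrences of a and v·a does not, a property expressible by a prefFO sentence of quantifier depth 3. -/
set_option maxHeartbeats 1000000

namespace PrefSynth

/-- `(ab)^n`, over the alphabet `Bool` with `a = true` and `b = false`. -/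
def abRep : ℕ → List Bool
  | 0 => []
  | n + 1 => true :: false :: abRep n

/-- The infinite alternating word `ababab…` (`a = true`). -/
def Wab : Word Bool := Word.ofFun (fun i => decide (Even i))

lemma Wab_apply (i : ℕ) : Wab i = some (decide (Even i)) := rfl

lemma pos_Wab (m : ℕ) : Word.pos Wab m := by
  simp [Wab, Word.pos, Word.ofFun]

lemma pos_take {m L : ℕ} : Word.pos (Word.take Wab L) m ↔ m < L := by
  simp [Word.pos, Word.take, Wab, Word.ofFun]

/-- Truncated (threshold `3^r`) equality of distances, with parity. -/
def Eqv (r a a' : ℕ) : Prop :=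
  a = a' ∨ (3 ^ r ≤ a ∧ 3 ^ r ≤ a' ∧ a % 2 = a' % 2)

lemma Eqv.refl (r a : ℕ) : Eqv r a a := Or.inl rfl

lemma Eqv.symm {r a a'} (h : Eqv r a a') : Eqv r a' a := by
  rcases h with h | ⟨h1, h2, h3⟩
  · exact Or.inl h.symm
  · exact Or.inr ⟨h2, h1, h3.symm⟩

lemma Eqv.mono {r s a a'} (h : Eqv r a a') (hs : s ≤ r) : Eqv s a a' := by
  rcases h with h | ⟨h1, h2, h3⟩
  · exact Or.inl h
  · exact Or.inr ⟨le_trans (Nat.pow_le_pow_right (by norm_num) hs) h1,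
      le_trans (Nat.pow_le_pow_right (by norm_num) hs) h2, h3⟩

lemma Eqv.mod {r a a'} (h : Eqv r a a') : a % 2 = a' % 2 := by
  rcases h with rfl | h
  · rfl
  · exact h.2.2

lemma Eqv.zero {r a a'} (h : Eqv r a a') (ha : a = 0) : a' = 0 := by
  have h3 : 0 < 3 ^ r := pow_pos (by norm_num) r
  rcases h with h | h <;> omega

lemma Eqv.add {r a a' b b'} (h : Eqv r a a') (h' : Eqv r b b') :
    Eqv r (a + b) (a' + b') := by
  have hm := h.mod
  have hm' := h'.mod
  rcases h with rfl | ⟨h1, h2, h3⟩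
  · rcases h' with rfl | ⟨g1, g2, g3⟩
    · exact Or.inl rfl
    · exact Or.inr ⟨by omega, by omega, by omega⟩
  · exact Or.inr ⟨by omega, by omega, by omega⟩

/-- The EF-invariant between two assignments on the infinite alternating word. -/
def Inv (r : ℕ) {c : ℕ} (ρ ρ' : Fin c → ℕ) : Prop :=
  (∀ i j, ρ i ≤ ρ j ↔ ρ' i ≤ ρ' j) ∧
  (∀ i j, ρ i ≤ ρ j → Eqv r (ρ j - ρ i) (ρ' j - ρ' i)) ∧
  (∀ i, Eqv r (ρ i) (ρ' i))

lemma Inv.symm {r c} {ρ ρ' : Fin c → ℕ} (h : Inv r ρ ρ') : Inv r ρ' ρ := by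
  obtain ⟨h1, h2, h3⟩ := h
  refine ⟨fun i j => (h1 i j).symm, fun i j hle => ?_, fun i => (h3 i).symm⟩
  exact (h2 i j ((h1 i j).mpr hle)).symm

lemma Inv.mono {r s c} {ρ ρ' : Fin c → ℕ} (h : Inv r ρ ρ') (hs : s ≤ r) :
    Inv s ρ ρ' := by
  obtain ⟨h1, h2, h3⟩ := h
  exact ⟨h1, fun i j hle => (h2 i j hle).mono hs, fun i => (h3 i).mono hs⟩

lemma Inv.cons0 {r c} {ρ ρ' : Fin c → ℕ} (h : Inv r ρ ρ') :
    Inv r (Fin.cons 0 ρ) (Fin.cons 0 ρ') := by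
  obtain ⟨h1, h2, h3⟩ := h
  have hz : ∀ i, ρ i = 0 ↔ ρ' i = 0 := by
    intro i
    constructor
    · exact fun e => (h3 i).zero e
    · exact fun e => (h3 i).symm.zero e
  refine ⟨?_, ?_, ?_⟩
  · intro i j
    refine Fin.cases ?_ (fun i' => ?_) i <;>
      [skip; refine Fin.cases ?_ (fun j' => ?_) j]
    · simp
    · simp only [Fin.cons_succ, Fin.cons_zero]
      rw [Nat.le_zero, Nat.le_zero]
      exact hz i'
    · simp only [Fin.cons_succ]
      exact h1 i' j'
  · intro i j
    refine Fin.cases ?_ (fun i' => ?_) i <;>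
      [refine Fin.cases ?_ (fun j' => ?_) j; refine Fin.cases ?_ (fun j' => ?_) j]
    · intro _; exact Eqv.refl _ _
    · intro _
      simp only [Fin.cons_succ, Fin.cons_zero, Nat.sub_zero]
      exact h3 j'
    · intro hle
      simp only [Fin.cons_succ, Fin.cons_zero] at hle ⊢
      have e1 : ρ i' = 0 := Nat.le_zero.mp hle
      have e2 : ρ' i' = 0 := (hz i').mp e1
      rw [e1, e2]
      exact Eqv.refl _ _
    · intro hle
      simp only [Fin.cons_succ] at hle ⊢
      exact h2 i' j' hle
  · intro i
    refine Fin.cases ?_ (fun i' => ?_) i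
    · exact Eqv.refl _ _
    · simp only [Fin.cons_succ]
      exact h3 i'

lemma Inv.snoc {r c} {ρ ρ' : Fin c → ℕ} {m m' : ℕ} (h : Inv r ρ ρ')
    (h1 : ∀ i, (ρ i ≤ m ↔ ρ' i ≤ m') ∧ (m ≤ ρ i ↔ m' ≤ ρ' i) ∧
      (ρ i ≤ m → Eqv r (m - ρ i) (m' - ρ' i)) ∧
      (m ≤ ρ i → Eqv r (ρ i - m) (ρ' i - m')))
    (h2 : Eqv r m m') :
    Inv r (Fin.snoc ρ m) (Fin.snoc ρ' m') := by
  refine ⟨?_, ?_, ?_⟩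
  · intro i j
    refine Fin.lastCases ?_ (fun i' => ?_) i <;>
      [refine Fin.lastCases ?_ (fun j' => ?_) j; refine Fin.lastCases ?_ (fun j' => ?_) j]
    · simp
    · simp only [Fin.snoc_last, Fin.snoc_castSucc]
      exact (h1 j').2.1
    · simp only [Fin.snoc_last, Fin.snoc_castSucc]
      exact (h1 i').1
    · simp only [Fin.snoc_castSucc]
      exact h.1 i' j'
  · intro i j
    refine Fin.lastCases ?_ (fun i' => ?_) i <;>
      [refine Fin.lastCases ?_ (fun j' => ?_) j; refine Fin.lastCases ?_ (fun j' => ?_) j]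
    · intro _
      simp only [Fin.snoc_last, Nat.sub_self]
      exact Eqv.refl _ _
    · simp only [Fin.snoc_last, Fin.snoc_castSucc]
      exact (h1 j').2.2.2
    · simp only [Fin.snoc_last, Fin.snoc_castSucc]
      exact (h1 i').2.2.1
    · simp only [Fin.snoc_castSucc]
      exact h.2.1 i' j'
  · intro i
    refine Fin.lastCases ?_ (fun i' => ?_) i
    · simpa only [Fin.snoc_last] using h2
    · simp only [Fin.snoc_castSucc]
      exact h.2.2 i'

/-- The key combinatorial step: extending a matched configuration by a new
pebble below the bound. -/
lemma key {s c : ℕ} {σ σ' : Fin c → ℕ} (h : Inv (s + 1) σ σ')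
    (h0 : ∃ i0, σ i0 = 0) (m : ℕ) (ht : ∃ it, m < σ it) :
    ∃ m', (∀ i, (σ i ≤ m ↔ σ' i ≤ m') ∧ (m ≤ σ i ↔ m' ≤ σ' i) ∧
      (σ i ≤ m → Eqv s (m - σ i) (m' - σ' i)) ∧
      (m ≤ σ i → Eqv s (σ i - m) (σ' i - m'))) ∧ Eqv s m m' := by
  obtain ⟨horder, hdiff, habs⟩ := h
  obtain ⟨i0, hi0⟩ := h0
  obtain ⟨it, hit⟩ := ht
  by_cases hex : ∃ i, σ i = m
  · obtain ⟨i, rfl⟩ := hex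
    exact ⟨σ' i, fun j => ⟨horder j i, horder i j,
      fun hle => (hdiff j i hle).mono (Nat.le_succ s),
      fun hle => (hdiff i j hle).mono (Nat.le_succ s)⟩,
      (habs i).mono (Nat.le_succ s)⟩
  · push_neg at hex
    have hA : (Finset.univ.filter (fun i => σ i ≤ m)).Nonempty :=
      ⟨i0, by simp [hi0]⟩
    have hB : (Finset.univ.filter (fun i => m < σ i)).Nonempty :=
      ⟨it, by simp [hit]⟩
    obtain ⟨ia, hiaA, hamax⟩ := Finset.exists_max_image _ σ hA
    obtain ⟨ib, hibB, hbmin⟩ := Finset.exists_min_image _ σ hB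
    simp only [Finset.mem_filter, Finset.mem_univ, true_and] at hiaA hibB hamax hbmin
    have ham : σ ia < m := lt_of_le_of_ne hiaA (hex ia)
    have hmb : m < σ ib := hibB
    have hab' : σ' ia < σ' ib := by
      have h1 := horder ib ia
      omega
    have hD := hdiff ia ib (by omega)
    have h3 : 0 < 3 ^ s := pow_pos (by norm_num) s
    obtain ⟨δ, hδ0, hδlt, he1, he2⟩ :
        ∃ δ, 0 < δ ∧ δ < σ' ib - σ' ia ∧ Eqv s (m - σ ia) δ ∧
          Eqv s (σ ib - m) ((σ' ib - σ' ia) - δ) := by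
      rcases hD with heq | ⟨hf1, hf2, hf3⟩
      · exact ⟨m - σ ia, by omega, by omega, Eqv.refl _ _, Or.inl (by omega)⟩
      · rw [pow_succ] at hf1 hf2
        by_cases hdl : m - σ ia < 3 ^ s
        · exact ⟨m - σ ia, by omega, by omega, Eqv.refl _ _,
            Or.inr ⟨by omega, by omega, by omega⟩⟩
        · by_cases hdr : σ ib - m < 3 ^ s
          · exact ⟨(σ' ib - σ' ia) - (σ ib - m), by omega, by omega,
              Or.inr ⟨by omega, by omega, by omega⟩, Or.inl (by omega)⟩
          · by_cases hp : (m - σ ia) % 2 = 3 ^ s % 2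
            · exact ⟨3 ^ s, by omega, by omega,
                Or.inr ⟨by omega, by omega, by omega⟩,
                Or.inr ⟨by omega, by omega, by omega⟩⟩
            · exact ⟨3 ^ s + 1, by omega, by omega,
                Or.inr ⟨by omega, by omega, by omega⟩,
                Or.inr ⟨by omega, by omega, by omega⟩⟩
    refine ⟨σ' ia + δ, fun j => ?_, ?_⟩
    · by_cases hj : σ j ≤ m
      · have hja : σ j ≤ σ ia := hamax j hj
        have hja' : σ' j ≤ σ' ia := (horder j ia).mp hja
        refine ⟨iff_of_true hj (by omega), iff_of_false (by omega) (by omega),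
          fun _ => ?_, fun hc => absurd hc (by omega)⟩
        have hadd := Eqv.add ((hdiff j ia hja).mono (Nat.le_succ s)) he1
        have e1 : (σ ia - σ j) + (m - σ ia) = m - σ j := by omega
        have e2 : (σ' ia - σ' j) + δ = σ' ia + δ - σ' j := by omega
        rwa [e1, e2] at hadd
      · have hjm : m < σ j := by omega
        have hjb : σ ib ≤ σ j := hbmin j hjm
        have hjb' : σ' ib ≤ σ' j := (horder ib j).mp hjb
        refine ⟨iff_of_false hj (by omega), iff_of_true (by omega) (by omega),
          fun hc => absurd hc (by omega), fun _ => ?_⟩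
        have hadd := Eqv.add he2 ((hdiff ib j hjb).mono (Nat.le_succ s))
        have e1 : (σ ib - m) + (σ j - σ ib) = σ j - m := by omega
        have e2 : ((σ' ib - σ' ia) - δ) + (σ' j - σ' ib) = σ' j - (σ' ia + δ) := by
          omega
        rwa [e1, e2] at hadd
    · have hadd := Eqv.add ((habs ia).mono (Nat.le_succ s)) he1
      have e1 : σ ia + (m - σ ia) = m := by omega
      rwa [e1] at hadd

/-- Satisfaction in a prefix of `Wab` agrees with satisfaction in `Wab` as long
as all pebbles lie inside the prefix. -/
lemma sat_take_iff {c : ℕ} (φ : PFm Bool c) : ∀ (L : ℕ) (ρ : Fin c → ℕ),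
    (∀ i, ρ i < L) →
    (PFm.Sat (Word.take Wab L) φ ρ ↔ PFm.Sat Wab φ ρ) := by
  induction φ with
  | eq i j => exact fun L ρ _ => Iff.rfl
  | lt i j => exact fun L ρ _ => Iff.rfl
  | letter a i =>
    intro L ρ h
    simp only [PFm.Sat, Word.take, if_pos (h i)]
  | and φ ψ ihφ ihψ =>
    intro L ρ h
    exact and_congr (ihφ L ρ h) (ihψ L ρ h)
  | not φ ih =>
    intro L ρ h
    exact not_congr (ih L ρ h)
  | exlt φ ih =>
    intro L ρ h
    simp only [PFm.Sat]
    constructor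
    · rintro ⟨m, _, hlt, hs⟩
      refine ⟨m, pos_Wab m, hlt, ?_⟩
      refine (ih L _ ?_).mp hs
      intro i
      refine Fin.lastCases ?_ (fun j => ?_) i
      · simpa only [Fin.snoc_last] using lt_trans hlt (h 0)
      · simpa only [Fin.snoc_castSucc] using h j
    · rintro ⟨m, _, hlt, hs⟩
      refine ⟨m, pos_take.mpr (lt_trans hlt (h 0)), hlt, ?_⟩
      refine (ih L _ ?_).mpr hs
      intro i
      refine Fin.lastCases ?_ (fun j => ?_) i
      · simpa only [Fin.snoc_last] using lt_trans hlt (h 0)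
      · simpa only [Fin.snoc_castSucc] using h j

/-- Transfer of satisfaction in `Wab` along the EF-invariant. -/
lemma sat_Wab_iff {c : ℕ} (φ : PFm Bool c) : ∀ (r : ℕ), φ.depth ≤ r →
    ∀ (ρ ρ' : Fin c → ℕ), Inv r ρ ρ' →
    (PFm.Sat Wab φ ρ ↔ PFm.Sat Wab φ ρ') := by
  induction φ with
  | eq i j =>
    intro r _ ρ ρ' h
    simp only [PFm.Sat]
    have h1 := h.1 i j
    have h2 := h.1 j i
    omega
  | lt i j =>
    intro r _ ρ ρ' h
    simp only [PFm.Sat]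
    have h1 := h.1 i j
    have h2 := h.1 j i
    omega
  | letter a i =>
    intro r _ ρ ρ' h
    simp only [PFm.Sat, Wab_apply]
    have hm := (h.2.2 i).mod
    have hpar : Even (ρ i) ↔ Even (ρ' i) := by
      rw [Nat.even_iff, Nat.even_iff]
      omega
    rw [decide_eq_decide.mpr hpar]
  | and φ ψ ihφ ihψ =>
    intro r hd ρ ρ' h
    have hdφ : φ.depth ≤ r := le_trans (le_max_left _ _) hd
    have hdψ : ψ.depth ≤ r := le_trans (le_max_right _ _) hd
    exact and_congr (ihφ r hdφ ρ ρ' h) (ihψ r hdψ ρ ρ' h)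
  | not φ ih =>
    intro r hd ρ ρ' h
    exact not_congr (ih r hd ρ ρ' h)
  | exlt φ ih =>
    intro r hd ρ ρ' h
    obtain ⟨s, rfl⟩ : ∃ s, r = s + 1 := ⟨r - 1, by
      have : φ.depth + 1 ≤ r := hd
      omega⟩
    have hdφ : φ.depth ≤ s := by
      have : φ.depth + 1 ≤ s + 1 := hd
      omega
    have main : ∀ (ρ ρ' : Fin _ → ℕ), Inv (s + 1) ρ ρ' →
        (∃ m, Word.pos Wab m ∧ m < ρ 0 ∧ PFm.Sat Wab φ (Fin.snoc ρ m)) →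
        (∃ m', Word.pos Wab m' ∧ m' < ρ' 0 ∧ PFm.Sat Wab φ (Fin.snoc ρ' m')) := by
      rintro ρ ρ' hinv ⟨m, _, hlt, hs⟩
      obtain ⟨m', hcond, habs'⟩ := key hinv.cons0 ⟨0, Fin.cons_zero _ _⟩ m
        ⟨Fin.succ 0, by simpa only [Fin.cons_succ] using hlt⟩
      have hm' : m' < ρ' 0 := by
        have hc := (hcond (Fin.succ 0)).1
        simp only [Fin.cons_succ] at hc
        omega
      refine ⟨m', pos_Wab m', hm', ?_⟩
      refine (ih s hdφ _ _ ?_).mp hs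
      refine Inv.snoc (hinv.mono (Nat.le_succ s)) (fun i => ?_) habs'
      simpa only [Fin.cons_succ] using hcond (Fin.succ i)
    simp only [PFm.Sat]
    exact ⟨main ρ ρ' h, main ρ' ρ h.symm⟩

lemma length_abRep (n : ℕ) : (abRep n).length = 2 * n := by
  induction n with
  | zero => rfl
  | succ n ih => simp [abRep, ih]; omega

lemma get_abRep : ∀ (n i : ℕ),
    (abRep n)[i]? = if i < 2 * n then some (decide (Even i)) else none := by
  intro n
  induction n with
  | zero => intro i; simp [abRep]
  | succ n ih =>
    intro i
    match i with
    | 0 => simp [abRep]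
    | 1 =>
      rw [if_pos (by omega)]
      simp [abRep, Nat.even_iff]
    | (j + 2) =>
      rw [show abRep (n + 1) = true :: false :: abRep n from rfl,
        List.getElem?_cons_succ, List.getElem?_cons_succ, ih j]
      by_cases hj : j < 2 * n
      · rw [if_pos hj, if_pos (by omega)]
        have hp : decide (Even j) = decide (Even (j + 2)) :=
          decide_eq_decide.mpr (by rw [Nat.even_iff, Nat.even_iff]; omega)
        rw [hp]
      · rw [if_neg hj, if_neg (by omega)]

lemma get_abRep_app : ∀ (n i : ℕ),
    (abRep n ++ [true])[i]? =
      if i < 2 * n + 1 then some (decide (Even i)) else none := by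
  intro n i
  rcases lt_trichotomy i (2 * n) with h | h | h
  · rw [List.getElem?_append_left (by rw [length_abRep]; exact h), get_abRep,
      if_pos h, if_pos (by omega)]
  · subst h
    rw [List.getElem?_append_right (by rw [length_abRep]), length_abRep,
      Nat.sub_self, if_pos (by omega)]
    simp [Nat.even_iff, Nat.mul_mod_right]
  · rw [List.getElem?_append_right (by rw [length_abRep]; omega), length_abRep,
      if_neg (by omega)]
    match e : i - 2 * n with
    | 0 => omega
    | (j + 1) => simp

lemma ofList_take (l : List Bool) (L : ℕ)
    (h : ∀ i, l[i]? = if i < L then some (decide (Even i)) else none) :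
    Word.ofList l = Word.take Wab L := by
  funext i
  show l[i]? = if i < L then Wab i else none
  rw [h i]
  split <;> rfl

lemma Inv.const (r : ℕ) {c : ℕ} (x y : ℕ) (hx : 3 ^ r ≤ x) (hy : 3 ^ r ≤ y)
    (hxy : x % 2 = y % 2) : Inv r (fun _ : Fin c => x) (fun _ => y) := by
  refine ⟨fun i j => by simp, fun i j _ => by simpa using Eqv.refl r 0,
    fun i => Or.inr ⟨hx, hy, hxy⟩⟩

/-- Agreement of the types of the two prefixes of `Wab`. -/
lemma sat_u_v (k n : ℕ) (hn : 3 ^ k + 1 ≤ n) : ∀ s : PSen Bool, s.depth ≤ k →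
    (PSen.Sat (Word.take Wab (2 * n + 1)) s ↔
     PSen.Sat (Word.take Wab (2 * n + 2)) s) := by
  intro s
  induction s with
  | exB φ =>
    intro hd
    have hdφ : φ.depth ≤ k := by
      have : φ.depth + 1 ≤ k := hd
      omega
    have h3 : 0 < 3 ^ k := pow_pos (by norm_num) k
    simp only [PSen.Sat]
    constructor
    · rintro ⟨m, hm, hs⟩
      have hm1 : m < 2 * n + 1 := pos_take.mp hm
      refine ⟨m, pos_take.mpr (by omega), ?_⟩
      exact (sat_take_iff φ _ _ (fun _ => show m < 2 * n + 2 by omega)).mpr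
        ((sat_take_iff φ _ _ (fun _ => hm1)).mp hs)
    · rintro ⟨m, hm, hs⟩
      have hm2 : m < 2 * n + 2 := pos_take.mp hm
      by_cases hm1 : m < 2 * n + 1
      · refine ⟨m, pos_take.mpr hm1, ?_⟩
        exact (sat_take_iff φ _ _ (fun _ => hm1)).mpr
          ((sat_take_iff φ _ _ (fun _ => hm2)).mp hs)
      · have hm0 : m = 2 * n + 1 := by omega
        subst hm0
        have hW : PFm.Sat Wab φ (fun _ => 2 * n + 1) :=
          (sat_take_iff φ _ _ (fun _ => hm2)).mp hs
        have hW2 : PFm.Sat Wab φ (fun _ => 2 * n - 1) :=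
          (sat_Wab_iff φ k hdφ _ _
            (Inv.const k _ _ (by omega) (by omega) (by omega))).mp hW
        refine ⟨2 * n - 1, pos_take.mpr (by omega), ?_⟩
        exact (sat_take_iff φ _ _ (fun _ => show 2 * n - 1 < 2 * n + 1 by omega)).mpr hW2
  | and s t ihs iht =>
    intro hd
    exact and_congr (ihs (le_trans (le_max_left _ _) hd))
      (iht (le_trans (le_max_right _ _) hd))
  | not s ih =>
    intro hd
    exact not_congr (ih hd)

/-- The depth-3 sentence expressing two consecutive `a`'s. -/
def sAA : PSen Bool :=
  .exB (.and (.letter true 0)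
    (.exlt (.and (.letter true 1) (.not (.exlt (.lt 1 2))))))

lemma depth_sAA : PSen.depth sAA = 3 := rfl

lemma pos_ofList (l : List Bool) (m : ℕ) :
    Word.pos (Word.ofList l) m ↔ m < l.length := by
  simp [Word.pos, Word.ofList, List.getElem?_eq_some_iff]

lemma sat_sAA (w : List Bool) :
    PSen.Sat (Word.ofList w) sAA ↔
      ∃ i : ℕ, w[i]? = some true ∧ w[i + 1]? = some true := by
  have hsnoc0 : ∀ (ρ : Fin 1 → ℕ) (y : ℕ), (Fin.snoc ρ y : Fin 2 → ℕ) 0 = ρ 0 :=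
    fun ρ y => by simpa using Fin.snoc_castSucc (α := fun _ => ℕ) y ρ 0
  have hsnoc1 : ∀ (ρ : Fin 1 → ℕ) (y : ℕ), (Fin.snoc ρ y : Fin 2 → ℕ) 1 = y :=
    fun ρ y => rfl
  have hsnoc20 : ∀ (ρ : Fin 2 → ℕ) (z : ℕ), (Fin.snoc ρ z : Fin 3 → ℕ) 0 = ρ 0 :=
    fun ρ z => by simpa using Fin.snoc_castSucc (α := fun _ => ℕ) z ρ 0
  have hsnoc21 : ∀ (ρ : Fin 2 → ℕ) (z : ℕ), (Fin.snoc ρ z : Fin 3 → ℕ) 1 = ρ 1 :=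
    fun ρ z => by simpa using Fin.snoc_castSucc (α := fun _ => ℕ) z ρ 1
  have hsnoc22 : ∀ (ρ : Fin 2 → ℕ) (z : ℕ), (Fin.snoc ρ z : Fin 3 → ℕ) 2 = z :=
    fun ρ z => rfl
  constructor
  · rintro ⟨m, hm, hs1, y, hy, hylt, hs⟩
    obtain ⟨hs2, hs3⟩ := hs
    have hs1' : w[m]? = some true := hs1
    have hs2' : w[(Fin.snoc (fun _ => m) y : Fin 2 → ℕ) 1]? = some true := hs2
    rw [hsnoc1] at hs2'
    have hylt' : y < m := hylt
    have hmlen : m < w.length := (pos_ofList w m).mp hm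
    have hym : y + 1 = m := by
      by_contra hne
      apply hs3
      refine ⟨y + 1, (pos_ofList w (y + 1)).mpr (by omega), ?_, ?_⟩
      · show y + 1 < (Fin.snoc (fun _ => m) y : Fin 2 → ℕ) 0
        rw [hsnoc0]
        show y + 1 < m
        omega
      · show (Fin.snoc (Fin.snoc (fun _ => m) y) (y + 1) : Fin 3 → ℕ) 1 <
          (Fin.snoc (Fin.snoc (fun _ => m) y) (y + 1) : Fin 3 → ℕ) 2
        rw [hsnoc21, hsnoc22, hsnoc1]
        omega
    exact ⟨y, hs2', by rw [hym]; exact hs1'⟩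
  · rintro ⟨i, h1, h2⟩
    obtain ⟨hlen, -⟩ := List.getElem?_eq_some_iff.mp h2
    refine ⟨i + 1, (pos_ofList w (i + 1)).mpr hlen, h2, i,
      (pos_ofList w i).mpr (by omega), ?_, ?_⟩
    · exact Nat.lt_succ_self i
    · constructor
      · show w[(Fin.snoc (fun _ => i + 1) i : Fin 2 → ℕ) 1]? = some true
        rw [hsnoc1]
        exact h1
      · rintro ⟨z, hz, hzlt, hzs⟩
        have hzlt0 : z < (Fin.snoc (fun _ => i + 1) i : Fin 2 → ℕ) 0 := hzlt
        rw [hsnoc0] at hzlt0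
        have hzlt' : z < i + 1 := hzlt0
        have hlt : (Fin.snoc (Fin.snoc (fun _ => i + 1) i) z : Fin 3 → ℕ) 1 <
            (Fin.snoc (Fin.snoc (fun _ => i + 1) i) z : Fin 3 → ℕ) 2 := hzs
        rw [hsnoc21, hsnoc22, hsnoc1] at hlt
        omega

lemma tp_eq_main (k n : ℕ) (hn : 3 ^ k + 1 ≤ n) :
    tp k (Word.ofList (abRep n ++ [true])) = tp k (Word.ofList (abRep (n + 1))) := by
  rw [ofList_take _ (2 * n + 1) (get_abRep_app n),
    ofList_take _ (2 * n + 2) (fun i => by rw [get_abRep (n + 1) i, show 2 * (n + 1) = 2 * n + 2 from by ring])]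
  ext s
  simp only [tp, Set.mem_setOf_eq]
  exact and_congr_right fun hd => sat_u_v k n hn s hd

lemma tp_ne_main (n : ℕ) :
    tp 3 (Word.ofList ((abRep n ++ [true]) ++ [true])) ≠
      tp 3 (Word.ofList (abRep (n + 1) ++ [true])) := by
  intro h
  have hw1a : ((abRep n ++ [true]) ++ [true])[2 * n]? = some true := by
    rw [List.getElem?_append_left (by simp [length_abRep]),
      get_abRep_app, if_pos (by omega)]
    simp [Nat.even_iff, Nat.mul_mod_right]
  have hw1b : ((abRep n ++ [true]) ++ [true])[2 * n + 1]? = some true := by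
    rw [List.getElem?_append_right (by simp [length_abRep])]
    simp [length_abRep]
  have h1 : sAA ∈ tp 3 (Word.ofList ((abRep n ++ [true]) ++ [true])) :=
    ⟨le_of_eq depth_sAA, (sat_sAA _).mpr ⟨2 * n, hw1a, hw1b⟩⟩
  rw [h] at h1
  obtain ⟨-, h2⟩ := h1
  obtain ⟨i, hi1, hi2⟩ := (sat_sAA _).mp h2
  rw [get_abRep_app (n + 1)] at hi1 hi2
  by_cases hc1 : i < 2 * (n + 1) + 1
  · rw [if_pos hc1] at hi1
    by_cases hc2 : i + 1 < 2 * (n + 1) + 1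
    · rw [if_pos hc2] at hi2
      have e1 : Even i := by simpa using hi1
      have e2 : Even (i + 1) := by simpa using hi2
      rw [Nat.even_iff] at e1 e2
      omega
    · rw [if_neg hc2] at hi2
      exact (Option.some_ne_none true hi2.symm).elim
  · rw [if_neg hc1] at hi1
    exact (Option.some_ne_none true hi1.symm).elim

/-- Having the same prefFO `k`-type is not a congruence for
concatenation: for every `k` there are words `u`, `v` with `tp_k(u) = tp_k(v)`
but `tp_3(u·a) ≠ tp_3(v·a)`.  Concretely, for `n` large enough with respect to
`k`, `u = (ab)^n·a` and `v = (ab)^{n+1}` satisfy `tp_k(u) = tp_k(v)`, while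
`u·a` contains two consecutive `a`'s and `v·a` does not, a property expressible
by a prefFO sentence of quantifier depth `3`. -/
theorem tp_not_congruence (k : ℕ) :
    (∃ N : ℕ, ∀ n : ℕ, N ≤ n →
      tp k (Word.ofList (abRep n ++ [true])) = tp k (Word.ofList (abRep (n + 1))) ∧
      tp 3 (Word.ofList ((abRep n ++ [true]) ++ [true])) ≠
        tp 3 (Word.ofList (abRep (n + 1) ++ [true]))) ∧
    (∃ u v : List Bool, tp k (Word.ofList u) = tp k (Word.ofList v) ∧
      tp 3 (Word.ofList (u ++ [true])) ≠ tp 3 (Word.ofList (v ++ [true]))) ∧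
    (∃ s : PSen Bool, PSen.depth s = 3 ∧ ∀ w : List Bool,
      (PSen.Sat (Word.ofList w) s ↔
        ∃ i : ℕ, w[i]? = some true ∧ w[i + 1]? = some true)) := by
  refine ⟨⟨3 ^ k + 1, fun n hn => ⟨tp_eq_main k n hn, tp_ne_main n⟩⟩,
    ⟨abRep (3 ^ k + 1) ++ [true], abRep (3 ^ k + 1 + 1),
      tp_eq_main k (3 ^ k + 1) le_rfl, tp_ne_main (3 ^ k + 1)⟩,
    ⟨sAA, depth_sAA, sat_sAA⟩⟩

end PrefSynth
end
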